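/- Let G and H be connected graphs of order at least 2. If the Cartesian product G □ H is well-dominated, then γ(G □ H) = γ(G)·n(H) = γ(H)·n(G). -/

import Mathlib

open SimpleGraph

variable {V : Type*}

/-- Closed neighborhood of a vertex. -/
def closedNbhd (G : SimpleGraph V) (v : V) : Set V := insert v (G.neighborSet v)

/-- Closed neighborhood of a set of vertices. -/
def closedNbhdSet (G : SimpleGraph V) (A : Set V) : Set V := ⋃ a ∈ A, closedNbhd G a

/-- `D` is a dominating set of `G`. -/
def IsDomSet (G : SimpleGraph V) (D : Set V) : Prop :=
  ∀ v, ∃ u ∈ D, v ∈ closedNbhd G u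

/-- `D` is a minimal dominating set of `G`. -/
def IsMinimalDomSet (G : SimpleGraph V) (D : Set V) : Prop :=
  IsDomSet G D ∧ ∀ D' ⊆ D, IsDomSet G D' → D' = D

/-- The domination number `γ`. -/
noncomputable def domNum (G : SimpleGraph V) : ℕ :=
  sInf {n | ∃ D : Set V, IsDomSet G D ∧ D.ncard = n}

/-- The upper domination number `Γ`. -/
noncomputable def upperDomNum (G : SimpleGraph V) : ℕ :=
  sSup {n | ∃ D : Set V, IsMinimalDomSet G D ∧ D.ncard = n}

/-- A graph is well-dominated if `γ = Γ`. -/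
def WellDominated (G : SimpleGraph V) : Prop := domNum G = upperDomNum G

/-- `A` is an independent set of `G`. -/
def IsIndep (G : SimpleGraph V) (A : Set V) : Prop :=
  ∀ u ∈ A, ∀ v ∈ A, ¬ G.Adj u v

/-- `A` is a maximal independent set of `G`. -/
def IsMaxIndep (G : SimpleGraph V) (A : Set V) : Prop :=
  IsIndep G A ∧ ∀ B, IsIndep G B → A ⊆ B → B = A

/-- The independence number `α`. -/
noncomputable def indepNum (G : SimpleGraph V) : ℕ :=
  sSup {n | ∃ A : Set V, IsIndep G A ∧ A.ncard = n}

/-- The strong product of two graphs. -/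
def strongProd {α β : Type*} (G : SimpleGraph α) (H : SimpleGraph β) :
    SimpleGraph (α × β) where
  Adj x y := x ≠ y ∧ (x.1 = y.1 ∨ G.Adj x.1 y.1) ∧ (x.2 = y.2 ∨ H.Adj x.2 y.2)
  symm := by
    constructor
    rintro x y ⟨h1, h2, h3⟩
    refine ⟨h1.symm, ?_, ?_⟩
    · cases h2 with
      | inl h => exact Or.inl h.symm
      | inr h => exact Or.inr h.symm
    · cases h3 with
      | inl h => exact Or.inl h.symm
      | inr h => exact Or.inr h.symm
  loopless := by constructor; rintro x ⟨h1, _⟩; exact h1 rfl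

/-- The direct (tensor) product of two graphs. -/
def tensorProd {α β : Type*} (G : SimpleGraph α) (H : SimpleGraph β) :
    SimpleGraph (α × β) where
  Adj x y := G.Adj x.1 y.1 ∧ H.Adj x.2 y.2
  symm := ⟨fun _ _ h => ⟨h.1.symm, h.2.symm⟩⟩
  loopless := ⟨fun _ h => G.irrefl h.1⟩

/-- The corona `G ⊙ K₁`. -/
def corona {α : Type*} (G : SimpleGraph α) : SimpleGraph (α ⊕ α) :=
  SimpleGraph.fromRel (fun x y =>
    match x, y with
    | Sum.inl u, Sum.inl v => G.Adj u v
    | Sum.inl u, Sum.inr v => u = v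
    | _, _ => False)

/-- The private neighborhood `pn[u,D] = N[u] - N[D - {u}]`. -/
def privateNbhd (G : SimpleGraph V) (D : Set V) (u : V) : Set V :=
  {x | x ∈ closedNbhd G u ∧ ∀ d ∈ D, d ≠ u → x ∉ closedNbhd G d}

/-- A set `D` is open irredundant if every vertex of `D` has an external
private neighbor. -/
def IsOpenIrred (G : SimpleGraph V) (D : Set V) : Prop :=
  ∀ u ∈ D, ∃ x ∈ G.neighborSet u, ∀ d ∈ D, d ≠ u → x ∉ closedNbhd G d

section BoxDomAux

open Set

variable {α β : Type*}

lemma mem_closedNbhd_iff {G : SimpleGraph α} {u v : α} :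
    v ∈ closedNbhd G u ↔ v = u ∨ G.Adj u v := by
  simp [closedNbhd]

lemma isDomSet_univ (G : SimpleGraph α) : IsDomSet G Set.univ :=
  fun v => ⟨v, trivial, mem_closedNbhd_iff.mpr (Or.inl rfl)⟩

lemma domNum_le {G : SimpleGraph α} {D : Set α} (hD : IsDomSet G D) :
    domNum G ≤ D.ncard := Nat.sInf_le ⟨D, hD, rfl⟩

lemma exists_domNum_set (G : SimpleGraph α) :
    ∃ D : Set α, IsDomSet G D ∧ D.ncard = domNum G := by
  have hne : {n | ∃ D : Set α, IsDomSet G D ∧ D.ncard = n}.Nonempty :=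
    ⟨(Set.univ : Set α).ncard, Set.univ, isDomSet_univ G, rfl⟩
  exact Nat.sInf_mem hne

/-- Bollobás–Cockayne: an isolate-free finite graph has a minimum dominating
set that is open irredundant. -/
lemma exists_good_domSet [Fintype α] (G : SimpleGraph α)
    (hfree : ∀ v : α, ∃ w, G.Adj v w) :
    ∃ D : Set α, IsDomSet G D ∧ IsOpenIrred G D ∧ D.ncard = domNum G := by
  classical
  set m : Set α → ℕ := fun D => {p : α × α | p.1 ∈ D ∧ p.2 ∈ D ∧ G.Adj p.1 p.2}.ncard with hm
  set F : Finset (Set α) := Finset.univ.filter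
    (fun D => IsDomSet G D ∧ D.ncard = domNum G) with hF
  have hFne : F.Nonempty := by
    obtain ⟨D, h1, h2⟩ := exists_domNum_set G
    exact ⟨D, by simp [hF, h1, h2]⟩
  obtain ⟨D, hDF, hmax⟩ := F.exists_max_image m hFne
  rw [hF, Finset.mem_filter] at hDF
  obtain ⟨-, hDdom, hDcard⟩ := hDF
  refine ⟨D, hDdom, ?_, hDcard⟩
  intro v hv
  by_contra hnoepn
  push_neg at hnoepn
  have hno : ∀ x, G.Adj v x → ∃ d ∈ D, d ≠ v ∧ x ∈ closedNbhd G d := by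
    intro x hx
    obtain ⟨d, hd, hd'⟩ := hnoepn x hx
    exact ⟨d, hd, hd'.1, hd'.2⟩
  have hself : ∀ d ∈ D, d ≠ v → v ∉ closedNbhd G d := by
    intro d hd hdv hvd
    have hdom' : IsDomSet G (D \ {v}) := by
      intro y
      obtain ⟨u, hu, hy⟩ := hDdom y
      by_cases huv : u = v
      · subst huv
        rcases mem_closedNbhd_iff.mp hy with rfl | hadj
        · exact ⟨d, ⟨hd, hdv⟩, hvd⟩
        · obtain ⟨d', hd', hdv', hyd'⟩ := hno y hadj
          exact ⟨d', ⟨hd', hdv'⟩, hyd'⟩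
      · exact ⟨u, ⟨hu, huv⟩, hy⟩
    have h1 := domNum_le hdom'
    have h2 : (D \ {v}).ncard < D.ncard :=
      Set.ncard_diff_singleton_lt_of_mem hv (Set.toFinite D)
    omega
  obtain ⟨w, hw⟩ := hfree v
  have hwv : w ≠ v := fun h => G.irrefl (h ▸ hw)
  have hwD : w ∉ D := fun hwD =>
    hself w hwD hwv (mem_closedNbhd_iff.mpr (Or.inr hw.symm))
  set D' : Set α := insert w (D \ {v}) with hD'
  have hdom' : IsDomSet G D' := by
    intro y
    obtain ⟨u, hu, hy⟩ := hDdom y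
    by_cases huv : u = v
    · subst huv
      rcases mem_closedNbhd_iff.mp hy with rfl | hadj
      · exact ⟨w, Set.mem_insert _ _, mem_closedNbhd_iff.mpr (Or.inr hw.symm)⟩
      · obtain ⟨d', hd', hdv', hyd'⟩ := hno y hadj
        exact ⟨d', Set.mem_insert_of_mem _ ⟨hd', hdv'⟩, hyd'⟩
    · exact ⟨u, Set.mem_insert_of_mem _ ⟨hu, huv⟩, hy⟩
  have hpos : 0 < D.ncard := (Set.ncard_pos (Set.toFinite D)).mpr ⟨v, hv⟩
  have hcard' : D'.ncard = D.ncard := by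
    rw [hD', Set.ncard_insert_of_notMem (fun hmem => hwD hmem.1) (Set.toFinite _),
      Set.ncard_diff_singleton_of_mem hv]
    omega
  have hD'F : D' ∈ F := by
    rw [hF, Finset.mem_filter]
    exact ⟨Finset.mem_univ _, hdom', by rw [hcard', hDcard]⟩
  have hle := hmax D' hD'F
  obtain ⟨d0, hd0D, hd0v, hwd0⟩ := hno w hw
  have hwd0' : G.Adj d0 w := by
    rcases mem_closedNbhd_iff.mp hwd0 with h | h
    · exact absurd (h ▸ hd0D) hwD
    · exact h
  have hsubset : {p : α × α | p.1 ∈ D ∧ p.2 ∈ D ∧ G.Adj p.1 p.2}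
      ⊆ {p : α × α | p.1 ∈ D' ∧ p.2 ∈ D' ∧ G.Adj p.1 p.2} := by
    rintro ⟨a, b⟩ ⟨ha, hb, hab⟩
    have hbv : b ≠ v := by
      rintro rfl
      exact hself a ha (fun h => G.irrefl (h ▸ hab))
        (mem_closedNbhd_iff.mpr (Or.inr hab))
    have hav : a ≠ v := by
      rintro rfl
      exact hself b hb (fun h => G.irrefl (h ▸ hab).symm)
        (mem_closedNbhd_iff.mpr (Or.inr hab.symm))
    exact ⟨Set.mem_insert_of_mem _ ⟨ha, hav⟩, Set.mem_insert_of_mem _ ⟨hb, hbv⟩, hab⟩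
  have hss : {p : α × α | p.1 ∈ D ∧ p.2 ∈ D ∧ G.Adj p.1 p.2}
      ⊂ {p : α × α | p.1 ∈ D' ∧ p.2 ∈ D' ∧ G.Adj p.1 p.2} := by
    rw [Set.ssubset_iff_of_subset hsubset]
    refine ⟨(w, d0), ⟨Set.mem_insert _ _,
      Set.mem_insert_of_mem _ ⟨hd0D, hd0v⟩, hwd0'.symm⟩, fun hc => hwD hc.1⟩
  have hlt : m D < m D' := Set.ncard_lt_ncard hss (Set.toFinite _)
  omega

lemma ncard_prod_univ [Fintype β] (D : Set α) :
    (D ×ˢ (Set.univ : Set β)).ncard = D.ncard * Fintype.card β := by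
  rw [← Nat.card_coe_set_eq, ← Nat.card_coe_set_eq,
    Nat.card_congr (Equiv.Set.prod _ _), Nat.card_prod]
  congr 1
  rw [Nat.card_congr (Equiv.Set.univ β), Nat.card_eq_fintype_card]

lemma ncard_univ_prod [Fintype α] (D : Set β) :
    ((Set.univ : Set α) ×ˢ D).ncard = D.ncard * Fintype.card α := by
  rw [← Nat.card_coe_set_eq, ← Nat.card_coe_set_eq,
    Nat.card_congr (Equiv.Set.prod _ _), Nat.card_prod]
  rw [Nat.card_congr (Equiv.Set.univ α), Nat.card_eq_fintype_card, Nat.mul_comm]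

lemma le_upperDomNum [Fintype α] {G : SimpleGraph α} {D : Set α}
    (hD : IsMinimalDomSet G D) : D.ncard ≤ upperDomNum G := by
  apply le_csSup
  · refine ⟨Fintype.card α, ?_⟩
    rintro n ⟨E, -, rfl⟩
    calc E.ncard ≤ (Set.univ : Set α).ncard :=
          Set.ncard_le_ncard (Set.subset_univ E) (Set.toFinite _)
      _ = Fintype.card α := by rw [Set.ncard_univ, Nat.card_eq_fintype_card]
  · exact ⟨D, hD, rfl⟩

lemma prod_minimal_left {G : SimpleGraph α} {H : SimpleGraph β} {D : Set α}
    (hdom : IsDomSet G D) (hirr : IsOpenIrred G D) :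
    IsMinimalDomSet (G □ H) (D ×ˢ (Set.univ : Set β)) := by
  constructor
  · rintro ⟨g, h⟩
    obtain ⟨u, hu, hg⟩ := hdom g
    refine ⟨(u, h), ⟨hu, trivial⟩, ?_⟩
    rcases mem_closedNbhd_iff.mp hg with rfl | hadj
    · exact mem_closedNbhd_iff.mpr (Or.inl rfl)
    · exact mem_closedNbhd_iff.mpr (Or.inr (by rw [SimpleGraph.boxProd_adj]; exact Or.inl ⟨hadj, rfl⟩))
  · intro D' hsub hdom'
    refine Set.Subset.antisymm hsub ?_
    rintro ⟨d, h⟩ ⟨hd, -⟩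
    obtain ⟨x, hx, hpriv⟩ := hirr d hd
    have hxD : x ∉ D := by
      intro hxD
      have hxd : x ≠ d := fun heq => G.irrefl (heq ▸ hx)
      exact hpriv x hxD hxd (mem_closedNbhd_iff.mpr (Or.inl rfl))
    obtain ⟨⟨u, k⟩, huk, hmem⟩ := hdom' (x, h)
    have hukD : u ∈ D := (hsub huk).1
    rcases mem_closedNbhd_iff.mp hmem with heq | hadj
    · injection heq with h1 h2
      exact (hxD (by rw [h1]; exact hukD)).elim
    · rw [SimpleGraph.boxProd_adj] at hadj
      rcases hadj with ⟨hGa, hk⟩ | ⟨hHa, hu⟩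
      · have hGa' : G.Adj u x := hGa
        have hk' : k = h := hk
        have hud : u = d := by
          by_contra hne
          exact hpriv u hukD hne (mem_closedNbhd_iff.mpr (Or.inr hGa'))
        have heq2 : ((u, k) : α × β) = (d, h) := by rw [hud, hk']
        rw [← heq2]
        exact huk
      · have hu' : u = x := hu
        exact (hxD (by rw [← hu']; exact hukD)).elim

lemma prod_minimal_right {G : SimpleGraph α} {H : SimpleGraph β} {D : Set β}
    (hdom : IsDomSet H D) (hirr : IsOpenIrred H D) :
    IsMinimalDomSet (G □ H) ((Set.univ : Set α) ×ˢ D) := by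
  constructor
  · rintro ⟨g, h⟩
    obtain ⟨u, hu, hh⟩ := hdom h
    refine ⟨(g, u), ⟨trivial, hu⟩, ?_⟩
    rcases mem_closedNbhd_iff.mp hh with rfl | hadj
    · exact mem_closedNbhd_iff.mpr (Or.inl rfl)
    · exact mem_closedNbhd_iff.mpr (Or.inr (by rw [SimpleGraph.boxProd_adj]; exact Or.inr ⟨hadj, rfl⟩))
  · intro D' hsub hdom'
    refine Set.Subset.antisymm hsub ?_
    rintro ⟨g, d⟩ ⟨-, hd⟩
    obtain ⟨x, hx, hpriv⟩ := hirr d hd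
    have hxD : x ∉ D := by
      intro hxD
      have hxd : x ≠ d := fun heq => H.irrefl (heq ▸ hx)
      exact hpriv x hxD hxd (mem_closedNbhd_iff.mpr (Or.inl rfl))
    obtain ⟨⟨u, k⟩, huk, hmem⟩ := hdom' (g, x)
    have hukD : k ∈ D := (hsub huk).2
    rcases mem_closedNbhd_iff.mp hmem with heq | hadj
    · injection heq with h1 h2
      exact (hxD (by rw [h2]; exact hukD)).elim
    · rw [SimpleGraph.boxProd_adj] at hadj
      rcases hadj with ⟨hGa, hk⟩ | ⟨hHa, hu⟩
      · have hk' : k = x := hk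
        exact (hxD (by rw [← hk']; exact hukD)).elim
      · have hHa' : H.Adj k x := hHa
        have hu' : u = g := hu
        have hkd : k = d := by
          by_contra hne
          exact hpriv k hukD hne (mem_closedNbhd_iff.mpr (Or.inr hHa'))
        have heq2 : ((u, k) : α × β) = (g, d) := by rw [hu', hkd]
        rw [← heq2]
        exact huk

lemma exists_neighbor_of_connected [Fintype α] {G : SimpleGraph α}
    (hG : G.Connected) (hα : 2 ≤ Fintype.card α) (v : α) : ∃ w, G.Adj v w := by
  obtain ⟨u, hu⟩ := Fintype.exists_ne_of_one_lt_card (by omega) v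
  obtain ⟨p⟩ := hG.preconnected v u
  cases p with
  | nil => exact absurd rfl hu.symm
  | cons h _ => exact ⟨_, h⟩

end BoxDomAux

/-- If `G □ H` is well-dominated (both factors nontrivial and connected), then
`γ(G □ H) = γ(G)n(H) = γ(H)n(G)`. -/
theorem stmt_13 {α β : Type*} [Fintype α] [Fintype β]
    (G : SimpleGraph α) (H : SimpleGraph β)
    (hG : G.Connected) (hH : H.Connected)
    (hα : 2 ≤ Fintype.card α) (hβ : 2 ≤ Fintype.card β)
    (h : WellDominated (G □ H)) :
    domNum (G □ H) = domNum G * Fintype.card β ∧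
    domNum (G □ H) = domNum H * Fintype.card α := by
  obtain ⟨D, hDdom, hDirr, hDcard⟩ :=
    exists_good_domSet G (exists_neighbor_of_connected hG hα)
  obtain ⟨E, hEdom, hEirr, hEcard⟩ :=
    exists_good_domSet H (exists_neighbor_of_connected hH hβ)
  have hminD := prod_minimal_left (H := H) hDdom hDirr
  have hminE := prod_minimal_right (G := G) hEdom hEirr
  constructor
  · have h1 : domNum (G □ H) ≤ domNum G * Fintype.card β := by
      have := domNum_le hminD.1
      rwa [ncard_prod_univ, hDcard] at this
    have h2 : domNum G * Fintype.card β ≤ domNum (G □ H) := by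
      have := le_upperDomNum hminD
      rw [ncard_prod_univ, hDcard] at this
      rw [h]; exact this
    omega
  · have h1 : domNum (G □ H) ≤ domNum H * Fintype.card α := by
      have := domNum_le hminE.1
      rwa [ncard_univ_prod, hEcard] at this
    have h2 : domNum H * Fintype.card α ≤ domNum (G □ H) := by
      have := le_upperDomNum hminE
      rw [ncard_univ_prod, hEcard] at this
      rw [h]; exact this
    omega
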